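/- Let G = K_1 + H be the cone over a k-regular graph H on m vertices, with apex u. Then the eigenvalue support of u in G is exactly {λ_+, λ_−} where λ_± = (k ± √(k² + 4m))/2; consequently exp(−iτ' A(G)) has |(u,u)-entry| = 1 at τ' = 2π/√(k² + 4m), i.e., u is periodic in G at that time. -/

import Mathlib

open scoped Classical
open scoped Nat

/-- The cone over `H`: a new apex vertex (`none`) adjacent to every vertex of `H`, keeping
all edges of `H`. -/
def cone {V : Type*} (H : SimpleGraph V) : SimpleGraph (Option V) :=
  SimpleGraph.fromRel (fun x y =>
    (x = none ∧ y ≠ none) ∨ (∃ a b, x = some a ∧ y = some b ∧ H.Adj a b))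

/-- `λ ∈ σ_u` for the symmetric matrix `A`. -/
def SuppMem {V : Type*} [Fintype V] (A : Matrix V V ℝ) (lam : ℝ) (u : V) : Prop :=
  ∃ x : V → ℝ, A.mulVec x = lam • x ∧ x u ≠ 0

lemma cone_adj_none_some {V : Type*} (H : SimpleGraph V) (v : V) :
    (cone H).Adj none (some v) := by
  simp [cone, SimpleGraph.fromRel_adj]

lemma cone_adj_some_none {V : Type*} (H : SimpleGraph V) (v : V) :
    (cone H).Adj (some v) none := ((cone_adj_none_some H v).symm)

lemma cone_not_adj_none_none {V : Type*} (H : SimpleGraph V) :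
    ¬ (cone H).Adj none none := (cone H).irrefl

lemma cone_adj_some_some {V : Type*} (H : SimpleGraph V) (a b : V) :
    (cone H).Adj (some a) (some b) ↔ H.Adj a b := by
  constructor
  · rintro ⟨hne, (⟨h, -⟩ | ⟨a', b', ha, hb, hab⟩) | (⟨h, -⟩ | ⟨a', b', ha, hb, hab⟩)⟩
    · exact absurd h (by simp)
    · cases ha; cases hb; exact hab
    · exact absurd h (by simp)
    · cases ha; cases hb; exact hab.symm
  · intro h
    exact ⟨by simpa using h.ne, Or.inl (Or.inr ⟨a, b, rfl, rfl, h⟩)⟩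

/-- Entry-wise computation of `mulVec` by the cone adjacency matrix, at the apex. -/
lemma cone_mulVec_none {V : Type*} [Fintype V] [DecidableEq V] (H : SimpleGraph V)
    [DecidableRel H.Adj] {F : Type*} [Field F] (x : Option V → F) :
    ((cone H).adjMatrix F).mulVec x none = ∑ v : V, x (some v) := by
  classical
  rw [Matrix.mulVec]
  simp only [dotProduct, SimpleGraph.adjMatrix_apply]
  rw [Fintype.sum_option]
  simp [cone_not_adj_none_none, cone_adj_none_some]

lemma cone_mulVec_some {V : Type*} [Fintype V] [DecidableEq V] (H : SimpleGraph V)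
    [DecidableRel H.Adj] {F : Type*} [Field F] (x : Option V → F) (a : V) :
    ((cone H).adjMatrix F).mulVec x (some a) =
      x none + ∑ v : V, (if H.Adj a v then (1 : F) else 0) * x (some v) := by
  classical
  rw [Matrix.mulVec]
  simp only [dotProduct, SimpleGraph.adjMatrix_apply]
  rw [Fintype.sum_option]
  simp [cone_adj_some_none, cone_adj_some_some]

lemma degree_sum {V : Type*} [Fintype V] [DecidableEq V] (H : SimpleGraph V)
    [DecidableRel H.Adj] {F : Type*} [Field F] (a : V) :
    ∑ v : V, (if H.Adj a v then (1 : F) else 0) = (H.degree a : F) := by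
  classical
  simp [SimpleGraph.degree, SimpleGraph.neighborFinset_eq_filter, Finset.sum_boole]


/-- If `v` is an eigenvector of the complex matrix `M` with eigenvalue `μ`, then it is an
eigenvector of `exp M` with eigenvalue `exp μ`. -/
lemma exp_mulVec_eigen {n : Type*} [Fintype n] [DecidableEq n]
    (M : Matrix n n ℂ) (v : n → ℂ) (μ : ℂ) (h : M.mulVec v = μ • v) :
    (NormedSpace.exp M).mulVec v = Complex.exp μ • v := by
  letI : SeminormedRing (Matrix n n ℂ) := Matrix.linftyOpSemiNormedRing
  letI : NormedRing (Matrix n n ℂ) := Matrix.linftyOpNormedRing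
  letI : NormedAlgebra ℂ (Matrix n n ℂ) := Matrix.linftyOpNormedAlgebra
  have hpow : ∀ p : ℕ, (M ^ p).mulVec v = (μ ^ p) • v := by
    intro p
    induction p with
    | zero => simp [Matrix.one_mulVec]
    | succ q ih =>
      rw [pow_succ, ← Matrix.mulVec_mulVec, h, Matrix.mulVec_smul, ih, smul_smul, pow_succ]
      ring_nf
  have hsum : Summable (fun p : ℕ => (p !⁻¹ : ℂ) • M ^ p) :=
    NormedSpace.expSeries_summable' M
  let L0 : Matrix n n ℂ →ₗ[ℂ] (n → ℂ) :=
    { toFun := fun N => N.mulVec v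
      map_add' := fun A B => Matrix.add_mulVec A B v
      map_smul' := fun c N => Matrix.smul_mulVec c N v }
  let L : Matrix n n ℂ →L[ℂ] (n → ℂ) := LinearMap.toContinuousLinearMap L0
  have hL : ∀ N, L N = N.mulVec v := fun _ => rfl
  have h1 : (NormedSpace.exp M).mulVec v = L (∑' p : ℕ, (p !⁻¹ : ℂ) • M ^ p) := by
    rw [hL, NormedSpace.exp_eq_tsum ℂ]
  have hsc : Summable (fun p : ℕ => (p !⁻¹ : ℂ) * μ ^ p) := by
    simpa [smul_eq_mul] using NormedSpace.expSeries_summable' (𝕂 := ℂ) μ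
  rw [h1, L.map_tsum hsum]
  have h2 : ∀ p : ℕ, L ((p !⁻¹ : ℂ) • M ^ p) = ((p !⁻¹ : ℂ) * μ ^ p) • v := by
    intro p
    rw [map_smul, hL, hpow, smul_smul]
  rw [tsum_congr h2, hsc.tsum_smul_const]
  congr 1
  rw [Complex.exp_eq_exp_ℂ, NormedSpace.exp_eq_tsum ℂ]
  simp [smul_eq_mul]

/-- The key eigenvector computation for the cone. -/
lemma cone_eigen {V : Type*} [Fintype V] [DecidableEq V] (H : SimpleGraph V)
    [DecidableRel H.Adj] {k m : ℕ} (hm : Fintype.card V = m)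
    (hreg : ∀ v : V, H.degree v = k) {F : Type*} [Field F] (c lam : F)
    (hc : (m : F) * c = lam) (h2 : 1 + (k : F) * c = lam * c) :
    ((cone H).adjMatrix F).mulVec ((fun o => o.elim 1 fun _ => c) : Option V → F) =
      lam • ((fun o => o.elim 1 fun _ => c) : Option V → F) := by
  funext o
  cases o with
  | none =>
    rw [cone_mulVec_none]
    simp only [Option.elim, Pi.smul_apply, smul_eq_mul, Finset.sum_const,
      Finset.card_univ, hm, nsmul_eq_mul, mul_one]
    exact hc
  | some a =>
    rw [cone_mulVec_some]
    simp only [Option.elim, Pi.smul_apply, smul_eq_mul]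
    have : ∑ v : V, (if H.Adj a v then (1 : F) else 0) * c
        = (∑ v : V, if H.Adj a v then (1 : F) else 0) * c := by
      rw [Finset.sum_mul]
    rw [this, degree_sum, hreg a]
    rw [← h2]

theorem cone_apex_support_and_periodic {V : Type*} [Fintype V] [DecidableEq V]
    (H : SimpleGraph V) [DecidableRel H.Adj] (k m : ℕ)
    (hm : Fintype.card V = m) (hm1 : 1 ≤ m)
    (hreg : ∀ v : V, H.degree v = k) :
    {lam : ℝ | SuppMem ((cone H).adjMatrix ℝ) lam none} =
      {((k : ℝ) + Real.sqrt ((k : ℝ) ^ 2 + 4 * m)) / 2,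
        ((k : ℝ) - Real.sqrt ((k : ℝ) ^ 2 + 4 * m)) / 2} ∧
    ‖(NormedSpace.exp
        ((-(Complex.I * (2 * Real.pi / Real.sqrt ((k : ℝ) ^ 2 + 4 * m)))) •
          (cone H).adjMatrix ℂ) none none)‖ = 1 := by
  have hmpos : (0:ℝ) < m := by exact_mod_cast hm1
  set Δ : ℝ := Real.sqrt ((k : ℝ) ^ 2 + 4 * m) with hΔ
  have harg : (0:ℝ) < (k : ℝ) ^ 2 + 4 * m := by positivity
  have hΔpos : 0 < Δ := Real.sqrt_pos.mpr harg
  have hΔsq : Δ ^ 2 = (k : ℝ) ^ 2 + 4 * m := Real.sq_sqrt harg.le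
  set lamp : ℝ := ((k : ℝ) + Δ) / 2 with hlamp
  set lamm : ℝ := ((k : ℝ) - Δ) / 2 with hlamm
  have hqp : lamp * lamp = (k : ℝ) * lamp + m := by
    rw [hlamp]; nlinarith [hΔsq]
  have hqm : lamm * lamm = (k : ℝ) * lamm + m := by
    rw [hlamm]; nlinarith [hΔsq]
  -- construction of eigenvectors for any `lam` with `lam² = k lam + m`, generic field
  have hconstr : ∀ {F : Type} [Field F] [CharZero F] (lam : F),
      lam * lam = (k : F) * lam + m →
      ((cone H).adjMatrix F).mulVec ((fun o => o.elim 1 fun _ => lam / m) : Option V → F) =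
        lam • ((fun o => o.elim 1 fun _ => lam / m) : Option V → F) := by
    intro F _ _ lam hq
    have hmne : (m : F) ≠ 0 := Nat.cast_ne_zero.mpr (by omega)
    refine cone_eigen H hm hreg _ lam ?_ ?_
    · field_simp
    · field_simp
      first
      | linear_combination hq
      | linear_combination (-1 : F) * hq
  constructor
  · ext lam
    simp only [Set.mem_setOf_eq, Set.mem_insert_iff, Set.mem_singleton_iff]
    constructor
    · rintro ⟨x, hx, hxu⟩
      -- derive lam² = k lam + m
      set S : ℝ := ∑ v : V, x (some v) with hS
      have h1 : S = lam * x none := by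
        have := congrFun hx none
        rw [cone_mulVec_none] at this
        simpa [hS] using this
      have h2 : (m : ℝ) * x none + (k : ℝ) * S = lam * S := by
        have hsum : ∑ a : V, ((cone H).adjMatrix ℝ).mulVec x (some a)
            = ∑ a : V, lam * x (some a) := by
          refine Finset.sum_congr rfl fun a _ => ?_
          rw [hx]; simp
        have hlhs : ∑ a : V, ((cone H).adjMatrix ℝ).mulVec x (some a)
            = (m : ℝ) * x none + (k : ℝ) * S := by
          have : ∀ a : V, ((cone H).adjMatrix ℝ).mulVec x (some a)
              = x none + ∑ v : V, (if H.Adj a v then (1:ℝ) else 0) * x (some v) :=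
            fun a => cone_mulVec_some H x a
          rw [Finset.sum_congr rfl fun a _ => this a, Finset.sum_add_distrib,
            Finset.sum_const, Finset.card_univ, hm, nsmul_eq_mul]
          congr 1
          rw [Finset.sum_comm]
          rw [hS, Finset.mul_sum]
          refine Finset.sum_congr rfl fun v _ => ?_
          rw [← Finset.sum_mul]
          have : ∑ a : V, (if H.Adj a v then (1:ℝ) else 0)
              = ∑ a : V, (if H.Adj v a then (1:ℝ) else 0) := by
            exact Finset.sum_congr rfl fun a _ => if_congr (H.adj_comm a v) rfl rfl
          rw [this, degree_sum, hreg v]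
        rw [← hlhs, hsum, ← Finset.mul_sum]
      have hq : lam * lam = (k : ℝ) * lam + m := by
        have h3 : (lam * lam - (k:ℝ) * lam - m) * x none = 0 := by
          rw [h1] at h2; ring_nf; ring_nf at h2; linarith [h2]
        have := mul_eq_zero.mp h3
        rcases this with h | h
        · linarith [h]
        · exact absurd h hxu
      have hfac : (lam - lamp) * (lam - lamm) = 0 := by
        rw [hlamp, hlamm]; nlinarith [hΔsq, hq]
      rcases mul_eq_zero.mp hfac with h | h
      · left; rw [hlamp] at h ⊢; linarith
      · right; rw [hlamm] at h ⊢; linarith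
    · intro hlam
      have hq : lam * lam = (k : ℝ) * lam + m := by
        rcases hlam with h | h
        · rw [h]; exact hqp
        · rw [h]; exact hqm
      exact ⟨_, hconstr lam hq, by simp⟩
  · -- periodicity
    set τ : ℝ := 2 * Real.pi / Δ with hτ
    set M : Matrix (Option V) (Option V) ℂ :=
      (-(Complex.I * (τ : ℂ))) • (cone H).adjMatrix ℂ with hM
    have hqpC : (lamp : ℂ) * lamp = (k : ℂ) * lamp + m := by exact_mod_cast hqp
    have hqmC : (lamm : ℂ) * lamm = (k : ℂ) * lamm + m := by exact_mod_cast hqm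
    have hep := hconstr (lamp : ℂ) hqpC
    have hem := hconstr (lamm : ℂ) hqmC
    set vp : Option V → ℂ := fun o => o.elim 1 fun _ => (lamp : ℂ) / m with hvp
    set vm : Option V → ℂ := fun o => o.elim 1 fun _ => (lamm : ℂ) / m with hvm
    have hMp : M.mulVec vp = ((-(Complex.I * (τ : ℂ))) * lamp) • vp := by
      rw [hM, Matrix.smul_mulVec, hep, smul_smul]
    have hMm : M.mulVec vm = ((-(Complex.I * (τ : ℂ))) * lamm) • vm := by
      rw [hM, Matrix.smul_mulVec, hem, smul_smul]
    have hExpp := exp_mulVec_eigen M vp _ hMp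
    have hExpm := exp_mulVec_eigen M vm _ hMm
    set a : ℂ := -(lamm : ℂ) / Δ with ha
    set b : ℂ := (lamp : ℂ) / Δ with hb
    have hΔne : (Δ : ℂ) ≠ 0 := by exact_mod_cast hΔpos.ne'
    have hmne : (m : ℂ) ≠ 0 := Nat.cast_ne_zero.mpr (by omega)
    have hdiff : lamp - lamm = Δ := by rw [hlamp, hlamm]; ring
    have hdiffC : (lamp : ℂ) - lamm = (Δ : ℂ) := by exact_mod_cast hdiff
    have hab : a + b = 1 := by
      rw [ha, hb]
      field_simp
      linear_combination hdiffC
    have hsingle : (Pi.single none 1 : Option V → ℂ) = a • vp + b • vm := by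
      funext o
      cases o with
      | none =>
        show (1 : ℂ) = a * vp none + b * vm none
        rw [hvp, hvm]
        show (1 : ℂ) = a * 1 + b * 1
        rw [mul_one, mul_one, hab]
      | some w =>
        simp [hvp, hvm, Pi.single_apply, ha, hb]
        field_simp
        ring
    have hentry : (NormedSpace.exp M) none none
        = (NormedSpace.exp M).mulVec (Pi.single none 1) none := by
      rw [Matrix.mulVec_single]
      simp
    have hmain : (NormedSpace.exp M).mulVec (Pi.single none 1)
        = (a * Complex.exp ((-(Complex.I * (τ : ℂ))) * lamp)) • vp
          + (b * Complex.exp ((-(Complex.I * (τ : ℂ))) * lamm)) • vm := by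
      rw [hsingle, Matrix.mulVec_add, Matrix.mulVec_smul, Matrix.mulVec_smul,
        hExpp, hExpm, smul_smul, smul_smul]
    have hvpn : vp none = 1 := rfl
    have hvmn : vm none = 1 := rfl
    have hexp_eq : Complex.exp ((-(Complex.I * (τ : ℂ))) * lamp)
        = Complex.exp ((-(Complex.I * (τ : ℂ))) * lamm) := by
      have hτΔ : (τ : ℂ) * (Δ : ℂ) = 2 * Real.pi := by
        rw [hτ]
        push_cast
        field_simp
      have h1 : (lamp : ℂ) = (lamm : ℂ) + Δ := by rw [← hdiffC]; ring
      have h2 : (-(Complex.I * (τ : ℂ))) * (Δ : ℂ) = -(2 * Real.pi * Complex.I) := by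
        have : (τ : ℂ) * (Δ : ℂ) = 2 * Real.pi := hτΔ
        linear_combination (-Complex.I) * this
      have h3 : (-(Complex.I * (τ : ℂ))) * lamp
          = (-(Complex.I * (τ : ℂ))) * lamm + (-(2 * Real.pi * Complex.I)) := by
        rw [h1, mul_add, h2]
      rw [h3, Complex.exp_add]
      have h4 : Complex.exp (-(2 * Real.pi * Complex.I)) = 1 := by
        rw [Complex.exp_neg, Complex.exp_two_pi_mul_I]; simp
      rw [h4, mul_one]
    have hval : (NormedSpace.exp M) none none
        = Complex.exp ((-(Complex.I * (τ : ℂ))) * lamm) := by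
      rw [hentry, hmain]
      simp only [Pi.add_apply, Pi.smul_apply, hvpn, hvmn, smul_eq_mul, mul_one]
      rw [hexp_eq, ← add_mul, hab, one_mul]
    have hcast : (-(Complex.I * (2 * (Real.pi:ℂ) / (Δ:ℂ)))) = (-(Complex.I * ((τ:ℝ):ℂ))) := by
      rw [hτ]; push_cast; ring
    rw [hcast, ← hM, hval]
    rw [Complex.norm_exp]
    have : ((-(Complex.I * (τ : ℂ))) * lamm).re = 0 := by
      simp [Complex.mul_re, Complex.mul_im]
    rw [this, Real.exp_zero]
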